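/- Let X and Y be independent random variables on {0,1}^m (bitstrings of length m, with XOR as group operation), and let r ∈ {0,1}^m. If the most likely value of X XORed with the most likely value of Y does not equal r (under lexicographic tie-breaking of argmaxes), then Pr[X ⊕ Y = r] ≤ 1/2. -/
import Mathlib


open MeasureTheory ProbabilityTheory

/-- Lexicographic strict order on bitstrings (`false < true`). -/
def lexLt {m : ℕ} (x y : Fin m → Bool) : Prop :=
  ∃ i : Fin m, (∀ j, j < i → x j = y j) ∧ x i < y i

/-- `w` is the most likely value of a distribution `μ` on bitstrings, with ties broken
by taking the lexicographically first maximizer. -/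
def isMostLikely {m : ℕ} (μ : Measure (Fin m → Bool)) (w : Fin m → Bool) : Prop :=
  (∀ z, μ {z} ≤ μ {w}) ∧ ∀ z, μ {z} = μ {w} → z ≠ w → lexLt w z

/-- The purely arithmetic core of the argument. -/
lemma core_ineq {α : Type*} [Fintype α] [DecidableEq α]
    (p q : α → ℝ) (σ : α ≃ α) (xmax ymax : α)
    (hp0 : ∀ z, 0 ≤ p z) (hq0 : ∀ z, 0 ≤ q z)
    (hps : ∑ z, p z = 1) (hqs : ∑ z, q z = 1)
    (hpx : ∀ z, p z ≤ p xmax) (hqy : ∀ z, q z ≤ q ymax)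
    (hσx : σ xmax ≠ ymax) :
    ∑ z, p z * q (σ z) ≤ 1 / 2 := by
  classical
  set P := p xmax with hP
  set Q := q ymax with hQ
  by_cases hQle : Q ≤ 1 / 2
  · calc ∑ z, p z * q (σ z) ≤ ∑ z, p z * Q := by
          apply Finset.sum_le_sum; intro z _
          exact mul_le_mul_of_nonneg_left (hqy (σ z)) (hp0 z)
        _ = Q := by rw [← Finset.sum_mul, hps, one_mul]
        _ ≤ 1 / 2 := hQle
  by_cases hPle : P ≤ 1 / 2
  · calc ∑ z, p z * q (σ z) ≤ ∑ z, P * q (σ z) := by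
          apply Finset.sum_le_sum; intro z _
          exact mul_le_mul_of_nonneg_right (hpx z) (hq0 (σ z))
        _ = P * ∑ z, q (σ z) := by rw [Finset.mul_sum]
        _ = P * ∑ z, q z := by
          congr 1; exact Fintype.sum_equiv σ _ _ (fun z => rfl)
        _ = P := by rw [hqs, mul_one]
        _ ≤ 1 / 2 := hPle
  push_neg at hQle hPle
  -- both P, Q > 1/2
  have hqle : q (σ xmax) ≤ 1 - Q := by
    have : q (σ xmax) + q ymax ≤ ∑ z, q z := by
      rw [← Finset.sum_pair hσx]
      exact Finset.sum_le_sum_of_subset_of_nonneg (Finset.subset_univ _)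
        (fun z _ _ => hq0 z)
    rw [hqs] at this; linarith
  have hrest : ∑ z ∈ Finset.univ.erase xmax, p z = 1 - P := by
    have := Finset.add_sum_erase Finset.univ p (Finset.mem_univ xmax)
    rw [hps] at this; linarith
  have hsplit : ∑ z, p z * q (σ z)
      = p xmax * q (σ xmax) + ∑ z ∈ Finset.univ.erase xmax, p z * q (σ z) :=
    (Finset.add_sum_erase Finset.univ (fun z => p z * q (σ z))
      (Finset.mem_univ xmax)).symm
  have h2 : ∑ z ∈ Finset.univ.erase xmax, p z * q (σ z) ≤ (1 - P) * Q := by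
    rw [← hrest, Finset.sum_mul]
    apply Finset.sum_le_sum; intro z _
    exact mul_le_mul_of_nonneg_left (hqy (σ z)) (hp0 z)
  have h1 : p xmax * q (σ xmax) ≤ P * (1 - Q) := by
    exact mul_le_mul_of_nonneg_left hqle (hp0 xmax)
  have hP1 : P ≤ 1 := by
    have := Finset.single_le_sum (fun z _ => hp0 z) (Finset.mem_univ xmax)
    rw [hps] at this; exact this
  have hQ1 : Q ≤ 1 := by
    have := Finset.single_le_sum (fun z _ => hq0 z) (Finset.mem_univ ymax)
    rw [hqs] at this; exact this
  nlinarith [hsplit, h1, h2]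

/-- If `X`, `Y` are independent random bitstrings whose most likely values (with
lexicographic tie-breaking) XOR to something other than `r`, then
`Pr[X ⊕ Y = r] ≤ 1/2`. -/
theorem stmt8 {Ω : Type*} [MeasureSpace Ω] [IsProbabilityMeasure (volume : Measure Ω)]
    (m : ℕ) (X Y : Ω → (Fin m → Bool)) (hX : Measurable X) (hY : Measurable Y)
    (hind : IndepFun X Y volume)
    (xmax ymax r : Fin m → Bool)
    (hx : isMostLikely (Measure.map X volume) xmax)
    (hy : isMostLikely (Measure.map Y volume) ymax)
    (hne : (fun i => xor (xmax i) (ymax i)) ≠ r) :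
    volume {ω | (fun i => xor (X ω i) (Y ω i)) = r} ≤ 1 / 2 := by
  classical
  set σ : (Fin m → Bool) ≃ (Fin m → Bool) :=
    { toFun := fun z i => xor (z i) (r i)
      invFun := fun z i => xor (z i) (r i)
      left_inv := fun z => by funext i; simp [Bool.xor_assoc]
      right_inv := fun z => by funext i; simp [Bool.xor_assoc] } with hσ
  -- decompose the event
  have hset : {ω | (fun i => xor (X ω i) (Y ω i)) = r}
      = ⋃ z ∈ (Finset.univ : Finset (Fin m → Bool)), (X ⁻¹' {z} ∩ Y ⁻¹' {σ z}) := by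
    ext ω
    simp only [Set.mem_setOf_eq, Set.mem_iUnion, Set.mem_inter_iff, Set.mem_preimage,
      Set.mem_singleton_iff, Finset.mem_univ, exists_prop, true_and]
    constructor
    · intro h
      refine ⟨X ω, rfl, ?_⟩
      funext i
      have := congrFun h i
      simp only [hσ, Equiv.coe_fn_mk]
      cases hxi : X ω i <;> cases hyi : Y ω i <;> simp_all
    · rintro ⟨z, hz, hyz⟩
      funext i
      have h1 := congrFun hz i
      have h2 := congrFun hyz i
      simp only [hσ, Equiv.coe_fn_mk] at h2
      cases hri : r i <;> simp_all [Bool.xor_comm]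
  have hmeas : volume {ω | (fun i => xor (X ω i) (Y ω i)) = r}
      = ∑ z : Fin m → Bool, volume (X ⁻¹' {z}) * volume (Y ⁻¹' {σ z}) := by
    rw [hset, measure_biUnion_finset]
    · apply Finset.sum_congr rfl
      intro z _
      exact hind.measure_inter_preimage_eq_mul _ _ (measurableSet_singleton z)
        (measurableSet_singleton (σ z))
    · intro a _ b _ hab
      apply Set.disjoint_left.mpr
      rintro ω ⟨ha, -⟩ ⟨hb, -⟩
      exact hab (ha.symm.trans hb)
    · intro z _
      exact (hX (measurableSet_singleton z)).inter (hY (measurableSet_singleton (σ z)))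
  -- real valued probabilities
  set p : (Fin m → Bool) → ℝ := fun z => (volume (X ⁻¹' {z})).toReal with hp
  set q : (Fin m → Bool) → ℝ := fun z => (volume (Y ⁻¹' {z})).toReal with hq
  have hmapX : ∀ z, Measure.map X volume {z} = volume (X ⁻¹' {z}) := fun z =>
    Measure.map_apply hX (measurableSet_singleton z)
  have hmapY : ∀ z, Measure.map Y volume {z} = volume (Y ⁻¹' {z}) := fun z =>
    Measure.map_apply hY (measurableSet_singleton z)
  have hps : ∑ z, p z = 1 := by
    have := sum_measure_preimage_singleton (μ := volume)
      (Finset.univ : Finset (Fin m → Bool))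
      (f := X) (fun z _ => hX (measurableSet_singleton z))
    simp only [Finset.coe_univ, Set.preimage_univ, measure_univ] at this
    rw [hp, ← ENNReal.toReal_sum (fun z _ => measure_ne_top _ _)]
    rw [this]; simp
  have hqs : ∑ z, q z = 1 := by
    have := sum_measure_preimage_singleton (μ := volume)
      (Finset.univ : Finset (Fin m → Bool))
      (f := Y) (fun z _ => hY (measurableSet_singleton z))
    simp only [Finset.coe_univ, Set.preimage_univ, measure_univ] at this
    rw [hq, ← ENNReal.toReal_sum (fun z _ => measure_ne_top _ _)]
    rw [this]; simp
  have hpx : ∀ z, p z ≤ p xmax := fun z =>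
    ENNReal.toReal_mono (measure_ne_top _ _) (by rw [← hmapX, ← hmapX]; exact hx.1 z)
  have hqy : ∀ z, q z ≤ q ymax := fun z =>
    ENNReal.toReal_mono (measure_ne_top _ _) (by rw [← hmapY, ← hmapY]; exact hy.1 z)
  have hσx : σ xmax ≠ ymax := by
    intro h
    apply hne
    funext i
    have := congrFun h i
    simp only [hσ, Equiv.coe_fn_mk] at this
    rw [← this, ← Bool.xor_assoc, Bool.xor_self, Bool.false_xor]
  have hcore : ∑ z, p z * q (σ z) ≤ 1 / 2 :=
    core_ineq p q σ xmax ymax (fun z => ENNReal.toReal_nonneg)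
      (fun z => ENNReal.toReal_nonneg) hps hqs hpx hqy hσx
  have htr : (volume {ω | (fun i => xor (X ω i) (Y ω i)) = r}).toReal
      = ∑ z, p z * q (σ z) := by
    rw [hmeas, ENNReal.toReal_sum (fun z _ => ENNReal.mul_ne_top (measure_ne_top _ _)
      (measure_ne_top _ _))]
    exact Finset.sum_congr rfl fun z _ => ENNReal.toReal_mul
  rw [← ENNReal.toReal_le_toReal (measure_ne_top _ _) (by norm_num)]
  rw [htr]
  convert hcore using 2
  norm_num
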